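/- Let G be a connected d-regular graph in which every vertex is contained in at least m triangles and every edge is contained in at most t triangles, with t ≥ 1. Then the smallest adjacency eigenvalue of G satisfies λ(G) ≥ -d + m/t. -/

import Mathlib

/-- The smallest eigenvalue of a real symmetric matrix. -/
noncomputable def minEig {n : Type*} [Fintype n] [DecidableEq n] (hn : Nonempty n)
    {A : Matrix n n ℝ} (hA : A.IsHermitian) : ℝ :=
  Finset.univ.inf' (Finset.univ_nonempty_iff.mpr hn) hA.eigenvalues

/-- The adjacency matrix of a graph is Hermitian. -/
lemma adjHerm {V : Type*} [Fintype V] (G : SimpleGraph V) [DecidableRel G.Adj] :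
    (G.adjMatrix ℝ).IsHermitian := by
  ext i j
  simp [Matrix.conjTranspose_apply, SimpleGraph.adj_comm]



open Finset Matrix

section Aux

variable {V : Type*} [Fintype V] [DecidableEq V]

lemma rot3 (f : V → V → V → ℝ) :
    ∑ u, ∑ v, ∑ w, f u v w = ∑ u, ∑ v, ∑ w, f w u v := by
  rw [Finset.sum_comm]
  exact Finset.sum_congr rfl fun a _ => Finset.sum_comm

lemma rot3' (f : V → V → V → ℝ) :
    ∑ u, ∑ v, ∑ w, f u v w = ∑ u, ∑ v, ∑ w, f v w u :=
  (rot3 (fun u v w => f v w u)).symm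

lemma core (G : SimpleGraph V) [DecidableRel G.Adj] (d m t : ℕ) (ht : 1 ≤ t)
    (hreg : G.IsRegularOfDegree d)
    (hm : ∀ v : V, 2 * m ≤ (Finset.univ.filter fun p : V × V =>
      G.Adj v p.1 ∧ G.Adj v p.2 ∧ G.Adj p.1 p.2).card)
    (ht' : ∀ u v : V, G.Adj u v →
      (G.neighborFinset u ∩ G.neighborFinset v).card ≤ t)
    (x : V → ℝ) (lam : ℝ)
    (heig : (G.adjMatrix ℝ) *ᵥ x = lam • x) (hx : ∑ v, x v ^ 2 = 1) :
    lam ≥ -(d : ℝ) + (m : ℝ) / t := by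
  classical
  set c : V → V → V → ℝ := fun u v w => if G.Adj u v ∧ G.Adj v w ∧ G.Adj u w then 1 else 0 with hc
  have csymm : ∀ u v w, c w u v = c u v w := by
    intro u v w
    simp only [hc]
    refine if_congr ?_ rfl rfl
    constructor
    · rintro ⟨a, b, cc⟩; exact ⟨b, cc.symm, a.symm⟩
    · rintro ⟨a, b, cc⟩; exact ⟨cc.symm, a, b.symm⟩
  have ccyc : ∀ u v w, c u v w = c v w u := fun u v w => csymm v w u
  -- per-vertex eigen equation
  have heig' : ∀ u, ∑ v, (if G.Adj u v then x v else 0) = lam * x u := by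
    intro u
    have := congrFun heig u
    rw [G.adjMatrix_mulVec_apply] at this
    rw [← Finset.sum_filter, ← SimpleGraph.neighborFinset_eq_filter]
    simpa using this
  have A1 : ∑ u, ∑ v, (if G.Adj u v then x u * x v else 0) = lam := by
    have h : ∀ u, ∑ v, (if G.Adj u v then x u * x v else 0) = lam * x u ^ 2 := by
      intro u
      have h2 : ∑ v, (if G.Adj u v then x u * x v else 0)
          = x u * ∑ v, (if G.Adj u v then x v else 0) := by
        rw [Finset.mul_sum]
        exact Finset.sum_congr rfl fun v _ => by split <;> ring
      rw [h2, heig' u]; ring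
    rw [Finset.sum_congr rfl fun u _ => h u, ← Finset.mul_sum, hx, mul_one]
  have A2 : ∑ u, ∑ v, (if G.Adj u v then x u ^ 2 else 0) = (d : ℝ) := by
    have h : ∀ u, ∑ v, (if G.Adj u v then x u ^ 2 else 0) = (d : ℝ) * x u ^ 2 := by
      intro u
      rw [← Finset.sum_filter, ← SimpleGraph.neighborFinset_eq_filter, Finset.sum_const,
        nsmul_eq_mul]
      congr 1
      have : (G.neighborFinset u).card = d := hreg u
      exact_mod_cast this
    rw [Finset.sum_congr rfl fun u _ => h u, ← Finset.mul_sum, hx, mul_one]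
  have A3 : ∑ u, ∑ v, (if G.Adj u v then x v ^ 2 else 0) = (d : ℝ) := by
    rw [Finset.sum_comm]
    calc ∑ v, ∑ u, (if G.Adj u v then x v ^ 2 else 0)
        = ∑ v, ∑ u, (if G.Adj v u then x v ^ 2 else 0) := by
          refine Finset.sum_congr rfl fun v _ => Finset.sum_congr rfl fun u _ => ?_
          exact if_congr (G.adj_comm u v) rfl rfl
      _ = (d : ℝ) := A2
  have EA : ∑ u, ∑ v, (if G.Adj u v then (x u + x v) ^ 2 else 0) = 2 * lam + 2 * (d : ℝ) := by
    have h : ∀ u v : V, (if G.Adj u v then (x u + x v) ^ 2 else 0) =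
        (if G.Adj u v then x u ^ 2 else 0) + (if G.Adj u v then x v ^ 2 else 0)
          + 2 * (if G.Adj u v then x u * x v else 0) := by
      intro u v; split <;> ring
    calc ∑ u, ∑ v, (if G.Adj u v then (x u + x v) ^ 2 else 0)
        = ∑ u, ∑ v, ((if G.Adj u v then x u ^ 2 else 0) + (if G.Adj u v then x v ^ 2 else 0)
          + 2 * (if G.Adj u v then x u * x v else 0)) :=
          Finset.sum_congr rfl fun u _ => Finset.sum_congr rfl fun v _ => h u v
      _ = 2 * lam + 2 * (d : ℝ) := by
          simp only [Finset.sum_add_distrib, ← Finset.mul_sum, A1, A2, A3]; ring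
  -- symmetry facts
  have S1 : ∑ u, ∑ v, ∑ w, c u v w * (x v + x w) ^ 2
      = ∑ u, ∑ v, ∑ w, c u v w * (x u + x v) ^ 2 := by
    rw [rot3 (fun u v w => c u v w * (x v + x w) ^ 2)]
    refine Finset.sum_congr rfl fun u _ => Finset.sum_congr rfl fun v _ =>
      Finset.sum_congr rfl fun w _ => ?_
    rw [csymm]
  have S2 : ∑ u, ∑ v, ∑ w, c u v w * (x u + x w) ^ 2
      = ∑ u, ∑ v, ∑ w, c u v w * (x u + x v) ^ 2 := by
    rw [rot3' (fun u v w => c u v w * (x u + x w) ^ 2)]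
    refine Finset.sum_congr rfl fun u _ => Finset.sum_congr rfl fun v _ =>
      Finset.sum_congr rfl fun w _ => ?_
    rw [ccyc u v w]; ring
  have S3 : ∑ u, ∑ v, ∑ w, c u v w * x u ^ 2
      = ∑ u, ∑ v, ∑ w, c u v w * x w ^ 2 := by
    rw [rot3 (fun u v w => c u v w * x u ^ 2)]
    refine Finset.sum_congr rfl fun u _ => Finset.sum_congr rfl fun v _ =>
      Finset.sum_congr rfl fun w _ => ?_
    rw [csymm]
  have S4 : ∑ u, ∑ v, ∑ w, c u v w * x v ^ 2
      = ∑ u, ∑ v, ∑ w, c u v w * x w ^ 2 := by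
    rw [rot3' (fun u v w => c u v w * x v ^ 2)]
    refine Finset.sum_congr rfl fun u _ => Finset.sum_congr rfl fun v _ =>
      Finset.sum_congr rfl fun w _ => ?_
    rw [csymm v w u]
  have key : ∑ u, ∑ v, ∑ w, c u v w * (x u + x v) ^ 2
      ≥ ∑ u, ∑ v, ∑ w, c u v w * x w ^ 2 := by
    have pos : (0:ℝ) ≤ ∑ u, ∑ v, ∑ w, c u v w * (x u + x v + x w) ^ 2 := by
      refine Finset.sum_nonneg fun u _ => Finset.sum_nonneg fun v _ =>
        Finset.sum_nonneg fun w _ => mul_nonneg ?_ (sq_nonneg _)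
      simp only [hc]; positivity
    have expand : ∑ u, ∑ v, ∑ w, c u v w * (x u + x v + x w) ^ 2
        = ∑ u, ∑ v, ∑ w, c u v w * (x u + x v) ^ 2
          + ∑ u, ∑ v, ∑ w, c u v w * (x v + x w) ^ 2
          + ∑ u, ∑ v, ∑ w, c u v w * (x u + x w) ^ 2
          - ∑ u, ∑ v, ∑ w, c u v w * x u ^ 2
          - ∑ u, ∑ v, ∑ w, c u v w * x v ^ 2
          - ∑ u, ∑ v, ∑ w, c u v w * x w ^ 2 := by
      simp only [← Finset.sum_add_distrib, ← Finset.sum_sub_distrib]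
      refine Finset.sum_congr rfl fun u _ => Finset.sum_congr rfl fun v _ => ?_
      exact Finset.sum_congr rfl fun w _ => by ring
    rw [expand, S1, S2, S3, S4] at pos
    linarith
  have upper : ∑ u, ∑ v, ∑ w, c u v w * (x u + x v) ^ 2 ≤ (t : ℝ) * (2 * lam + 2 * (d : ℝ)) := by
    have step : ∀ u v : V, ∑ w, c u v w * (x u + x v) ^ 2
        ≤ (if G.Adj u v then (t : ℝ) * (x u + x v) ^ 2 else 0) := by
      intro u v
      by_cases h : G.Adj u v
      · rw [if_pos h]
        have hw : ∀ w, c u v w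
            = if w ∈ G.neighborFinset v ∩ G.neighborFinset u then 1 else 0 := by
          intro w
          have hiff : (G.Adj u v ∧ G.Adj v w ∧ G.Adj u w)
              ↔ w ∈ G.neighborFinset v ∩ G.neighborFinset u := by
            simp only [Finset.mem_inter, SimpleGraph.mem_neighborFinset]
            exact ⟨fun ⟨_, b, cc⟩ => ⟨b, cc⟩, fun ⟨b, cc⟩ => ⟨h, b, cc⟩⟩
          simp only [hc]
          exact if_congr hiff rfl rfl
        calc ∑ w, c u v w * (x u + x v) ^ 2
            = ((G.neighborFinset v ∩ G.neighborFinset u).card : ℝ) * (x u + x v) ^ 2 := by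
              rw [← Finset.sum_mul]
              congr 1
              rw [Finset.sum_congr rfl fun w _ => hw w, Finset.sum_boole,
                Finset.filter_mem_eq_inter, Finset.univ_inter]
          _ ≤ (t : ℝ) * (x u + x v) ^ 2 := by
              apply mul_le_mul_of_nonneg_right _ (sq_nonneg _)
              have h2 := ht' v u h.symm
              exact_mod_cast h2
      · rw [if_neg h]
        apply le_of_eq
        refine Finset.sum_eq_zero fun w _ => ?_
        simp only [hc]
        rw [if_neg (fun hcon => h hcon.1)]
        ring
    calc ∑ u, ∑ v, ∑ w, c u v w * (x u + x v) ^ 2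
        ≤ ∑ u, ∑ v, (if G.Adj u v then (t : ℝ) * (x u + x v) ^ 2 else 0) :=
          Finset.sum_le_sum fun u _ => Finset.sum_le_sum fun v _ => step u v
      _ = (t : ℝ) * ∑ u, ∑ v, (if G.Adj u v then (x u + x v) ^ 2 else 0) := by
          rw [Finset.mul_sum]
          refine Finset.sum_congr rfl fun u _ => ?_
          rw [Finset.mul_sum]
          exact Finset.sum_congr rfl fun v _ => by split <;> ring
      _ = (t : ℝ) * (2 * lam + 2 * (d : ℝ)) := by rw [EA]
  have lower : (2 * (m : ℝ)) ≤ ∑ u, ∑ v, ∑ w, c u v w * x u ^ 2 := by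
    have step : ∀ u : V, 2 * (m : ℝ) * x u ^ 2 ≤ ∑ v, ∑ w, c u v w * x u ^ 2 := by
      intro u
      have hcard : ∑ v, ∑ w, c u v w
          = ((Finset.univ.filter fun p : V × V =>
              G.Adj u p.1 ∧ G.Adj u p.2 ∧ G.Adj p.1 p.2).card : ℝ) := by
        have e1 : ∑ p : V × V, (if G.Adj u p.1 ∧ G.Adj u p.2 ∧ G.Adj p.1 p.2
              then (1:ℝ) else 0) = ∑ v, ∑ w, c u v w := by
          rw [Fintype.sum_prod_type]
          refine Finset.sum_congr rfl fun v _ => Finset.sum_congr rfl fun w _ => ?_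
          simp only [hc]
          exact if_congr ⟨fun ⟨a, b, cc⟩ => ⟨a, cc, b⟩, fun ⟨a, b, cc⟩ => ⟨a, cc, b⟩⟩ rfl rfl
        rw [← e1, Finset.sum_boole]
      calc 2 * (m : ℝ) * x u ^ 2 ≤ (∑ v, ∑ w, c u v w) * x u ^ 2 := by
            apply mul_le_mul_of_nonneg_right _ (sq_nonneg _)
            rw [hcard]
            exact_mod_cast hm u
        _ = ∑ v, ∑ w, c u v w * x u ^ 2 := by
            rw [Finset.sum_mul]
            exact Finset.sum_congr rfl fun v _ => by rw [Finset.sum_mul]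
    calc 2 * (m : ℝ) = 2 * (m : ℝ) * ∑ u, x u ^ 2 := by rw [hx, mul_one]
      _ = ∑ u, 2 * (m : ℝ) * x u ^ 2 := by rw [Finset.mul_sum]
      _ ≤ ∑ u, ∑ v, ∑ w, c u v w * x u ^ 2 := Finset.sum_le_sum fun u _ => step u
  have final : 2 * (m : ℝ) ≤ (t : ℝ) * (2 * lam + 2 * (d : ℝ)) := by
    calc 2 * (m : ℝ) ≤ ∑ u, ∑ v, ∑ w, c u v w * x u ^ 2 := lower
      _ = ∑ u, ∑ v, ∑ w, c u v w * x w ^ 2 := S3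
      _ ≤ ∑ u, ∑ v, ∑ w, c u v w * (x u + x v) ^ 2 := key
      _ ≤ (t : ℝ) * (2 * lam + 2 * (d : ℝ)) := upper
  have htpos : (0:ℝ) < t := by exact_mod_cast ht
  rw [ge_iff_le, ← sub_nonneg]
  have heq : lam - (-(d:ℝ) + m / t) = ((t : ℝ) * (2 * lam + 2 * d) - 2 * m) / (2 * t) := by
    field_simp; ring
  rw [heq]
  apply div_nonneg (by linarith) (by linarith)


end Aux

/-- If `G` is a connected `d`-regular graph in which every vertex lies in at least `m`
triangles (counted here via ordered pairs: each triangle at `v` gives two ordered pairs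
of neighbours) and every edge lies in at most `t ≥ 1` triangles (i.e. adjacent vertices
have at most `t` common neighbours), then the smallest adjacency eigenvalue of `G` is
at least `-d + m/t`. -/
theorem stmt18 {V : Type*} [Fintype V] [DecidableEq V] (hV : Nonempty V)
    (G : SimpleGraph V) [DecidableRel G.Adj] (d m t : ℕ) (ht : 1 ≤ t)
    (hconn : G.Connected) (hreg : G.IsRegularOfDegree d)
    (hm : ∀ v : V, 2 * m ≤ (Finset.univ.filter fun p : V × V =>
      G.Adj v p.1 ∧ G.Adj v p.2 ∧ G.Adj p.1 p.2).card)
    (ht' : ∀ u v : V, G.Adj u v →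
      (G.neighborFinset u ∩ G.neighborFinset v).card ≤ t) :
    minEig hV (adjHerm G) ≥ -(d : ℝ) + (m : ℝ) / t := by
  classical
  rw [ge_iff_le, minEig]
  apply Finset.le_inf'
  intro i _
  set hA := adjHerm G with hAdef
  have heig : (G.adjMatrix ℝ) *ᵥ ⇑(hA.eigenvectorBasis i)
      = hA.eigenvalues i • ⇑(hA.eigenvectorBasis i) := by
    simpa using hA.mulVec_eigenvectorBasis i
  have hnorm : ∑ v, (hA.eigenvectorBasis i v) ^ 2 = 1 := by
    have h2 := hA.eigenvectorBasis.orthonormal.1 i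
    have h3 := real_inner_self_eq_norm_sq (hA.eigenvectorBasis i)
    rw [h2] at h3
    simp only [PiLp.inner_apply, RCLike.inner_apply, conj_trivial] at h3
    simpa [PiLp.inner_apply, pow_two] using h3
  exact core G d m t ht hreg hm ht' _ _ heig hnorm
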